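/- Let φ(t) = t^5·exp(sin(ln t)) for t > 0 and φ(0) = 0. Then φ is an Orlicz function (convex, increasing, φ(0) = 0), and its multiplier group {c > 0 : φ(ct) = φ(c)φ(t) for all t > 0} equals {e^{2πk} : k ∈ ℤ}. -/

import Mathlib

open Set Real

/-- The Orlicz function `φ(t) = t^5 exp(sin(ln t))` for `t > 0`, `φ(0) = 0`
(also `0` for `t < 0`). -/
noncomputable def phiEx (t : ℝ) : ℝ :=
  if 0 < t then t ^ 5 * Real.exp (Real.sin (Real.log t)) else 0

lemma phiEx_of_pos {t : ℝ} (ht : 0 < t) :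
    phiEx t = t ^ 5 * Real.exp (Real.sin (Real.log t)) := if_pos ht

lemma hasDerivAt_phi1 {x : ℝ} (hx : 0 < x) :
    HasDerivAt (fun t => t ^ 5 * Real.exp (Real.sin (Real.log t)))
      (x ^ 4 * Real.exp (Real.sin (Real.log x)) * (5 + Real.cos (Real.log x))) x := by
  have hlog : HasDerivAt Real.log x⁻¹ x := Real.hasDerivAt_log hx.ne'
  have hsin : HasDerivAt (fun t => Real.sin (Real.log t)) (Real.cos (Real.log x) * x⁻¹) x :=
    (Real.hasDerivAt_sin (Real.log x)).comp x hlog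
  have hexp : HasDerivAt (fun t => Real.exp (Real.sin (Real.log t)))
      (Real.exp (Real.sin (Real.log x)) * (Real.cos (Real.log x) * x⁻¹)) x :=
    hsin.exp
  have hpow : HasDerivAt (fun t : ℝ => t ^ 5) (5 * x ^ 4) x := by
    simpa using hasDerivAt_pow 5 x
  have h : HasDerivAt (fun t => t ^ 5 * Real.exp (Real.sin (Real.log t))) _ x := hpow.mul hexp
  convert h using 1
  field_simp

lemma hasDerivAt_phi2 {x : ℝ} (hx : 0 < x) :
    HasDerivAt (fun t => t ^ 4 * Real.exp (Real.sin (Real.log t)) * (5 + Real.cos (Real.log t)))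
      (x ^ 3 * Real.exp (Real.sin (Real.log x)) *
        (20 + 9 * Real.cos (Real.log x) + Real.cos (Real.log x) ^ 2 - Real.sin (Real.log x))) x := by
  have hlog : HasDerivAt Real.log x⁻¹ x := Real.hasDerivAt_log hx.ne'
  have hsin : HasDerivAt (fun t => Real.sin (Real.log t)) (Real.cos (Real.log x) * x⁻¹) x :=
    (Real.hasDerivAt_sin (Real.log x)).comp x hlog
  have hexp : HasDerivAt (fun t => Real.exp (Real.sin (Real.log t)))
      (Real.exp (Real.sin (Real.log x)) * (Real.cos (Real.log x) * x⁻¹)) x :=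
    hsin.exp
  have hcos : HasDerivAt (fun t => Real.cos (Real.log t)) (-Real.sin (Real.log x) * x⁻¹) x :=
    (Real.hasDerivAt_cos (Real.log x)).comp x hlog
  have hcos5 : HasDerivAt (fun t => 5 + Real.cos (Real.log t)) (-Real.sin (Real.log x) * x⁻¹) x :=
    hcos.const_add 5
  have hpow : HasDerivAt (fun t : ℝ => t ^ 4) (4 * x ^ 3) x := by
    simpa using hasDerivAt_pow 4 x
  have h : HasDerivAt (fun t => t ^ 4 * Real.exp (Real.sin (Real.log t)) * (5 + Real.cos (Real.log t))) _ x :=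
    (hpow.mul hexp).mul hcos5
  simp only [Pi.mul_apply] at h
  convert h using 1
  field_simp
  ring

lemma deriv_phiEx {x : ℝ} (hx : 0 < x) :
    deriv phiEx x = x ^ 4 * Real.exp (Real.sin (Real.log x)) * (5 + Real.cos (Real.log x)) := by
  have h : phiEx =ᶠ[nhds x] fun t => t ^ 5 * Real.exp (Real.sin (Real.log t)) := by
    filter_upwards [IsOpen.mem_nhds isOpen_Ioi hx] with t ht
    exact phiEx_of_pos ht
  rw [h.deriv_eq]
  exact (hasDerivAt_phi1 hx).deriv

lemma deriv2_phiEx {x : ℝ} (hx : 0 < x) :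
    deriv (deriv phiEx) x = x ^ 3 * Real.exp (Real.sin (Real.log x)) *
      (20 + 9 * Real.cos (Real.log x) + Real.cos (Real.log x) ^ 2 - Real.sin (Real.log x)) := by
  have h : deriv phiEx =ᶠ[nhds x]
      fun t => t ^ 4 * Real.exp (Real.sin (Real.log t)) * (5 + Real.cos (Real.log t)) := by
    filter_upwards [IsOpen.mem_nhds isOpen_Ioi hx] with t ht
    exact deriv_phiEx ht
  rw [h.deriv_eq]
  exact (hasDerivAt_phi2 hx).deriv

lemma phiEx_nonneg (t : ℝ) : 0 ≤ phiEx t := by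
  unfold phiEx
  split
  · rename_i ht
    positivity
  · exact le_rfl

lemma contOn_phiEx : ContinuousOn phiEx (Ici 0) := by
  intro x hx
  rcases eq_or_lt_of_le (mem_Ici.mp hx : (0:ℝ) ≤ x) with h0 | h0
  · subst h0
    have h00 : phiEx 0 = 0 := by simp [phiEx]
    rw [ContinuousWithinAt, h00]
    apply squeeze_zero' (Filter.Eventually.of_forall fun t => phiEx_nonneg t)
      (g := fun t => Real.exp 1 * t ^ 5)
    · filter_upwards [eventually_mem_nhdsWithin] with t (ht : t ∈ Ici (0:ℝ))
      by_cases htp : 0 < t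
      · rw [phiEx_of_pos htp, mul_comm]
        have hee : Real.exp (Real.sin (Real.log t)) ≤ Real.exp 1 :=
          Real.exp_le_exp.2 (Real.sin_le_one _)
        have ht5 : (0:ℝ) ≤ t ^ 5 := by positivity
        exact mul_le_mul_of_nonneg_right hee ht5
      · rw [show phiEx t = 0 from if_neg htp]
        exact mul_nonneg (Real.exp_pos 1).le (pow_nonneg ht 5)
    · have : Filter.Tendsto (fun t : ℝ => Real.exp 1 * t ^ 5) (nhds 0) (nhds (Real.exp 1 * 0 ^ 5)) :=
        (continuous_const.mul (continuous_pow 5)).tendsto 0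
      simpa using this.mono_left nhdsWithin_le_nhds
  · apply ContinuousAt.continuousWithinAt
    apply (hasDerivAt_phi1 h0).continuousAt.congr
    filter_upwards [IsOpen.mem_nhds isOpen_Ioi h0] with t ht
    exact (phiEx_of_pos ht).symm

/-- `φ(t) = t^5 exp(sin ln t)` is an Orlicz function (convex, increasing,
`φ(0)=0`) and its multiplier group `{c > 0 : φ(ct) = φ(c)φ(t) ∀ t > 0}` is
`{e^{2πk} : k ∈ ℤ}`. -/
theorem stmt_14 :
    ConvexOn ℝ (Ici 0) phiEx ∧ StrictMonoOn phiEx (Ici 0) ∧ phiEx 0 = 0 ∧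
    {c : ℝ | 0 < c ∧ ∀ t : ℝ, 0 < t → phiEx (c * t) = phiEx c * phiEx t} =
      {c : ℝ | ∃ k : ℤ, c = Real.exp (2 * Real.pi * k)} := by
  refine ⟨?_, ?_, by simp [phiEx], ?_⟩
  · apply StrictConvexOn.convexOn
    apply strictConvexOn_of_deriv2_pos (convex_Ici 0) contOn_phiEx
    intro x hx
    rw [interior_Ici] at hx
    have hx' : (0:ℝ) < x := hx
    have h2 : deriv^[2] phiEx x = deriv (deriv phiEx) x := rfl
    rw [h2, deriv2_phiEx hx']
    have h1 := Real.neg_one_le_cos (Real.log x)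
    have h3 := Real.sin_le_one (Real.log x)
    have h4 := sq_nonneg (Real.cos (Real.log x))
    have h5 : (0:ℝ) < x ^ 3 := by positivity
    have h6 : (0:ℝ) < Real.exp (Real.sin (Real.log x)) := Real.exp_pos _
    have h7 : (0:ℝ) < 20 + 9 * Real.cos (Real.log x) + Real.cos (Real.log x) ^ 2
        - Real.sin (Real.log x) := by nlinarith
    exact mul_pos (mul_pos h5 h6) h7
  · apply strictMonoOn_of_deriv_pos (convex_Ici 0) contOn_phiEx
    intro x hx
    rw [interior_Ici] at hx
    have hx' : (0:ℝ) < x := hx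
    rw [deriv_phiEx hx']
    have h1 := Real.neg_one_le_cos (Real.log x)
    have h5 : (0:ℝ) < x ^ 4 := by positivity
    have h6 : (0:ℝ) < Real.exp (Real.sin (Real.log x)) := Real.exp_pos _
    have h7 : (0:ℝ) < 5 + Real.cos (Real.log x) := by linarith
    exact mul_pos (mul_pos h5 h6) h7
  · ext c
    simp only [mem_setOf_eq]
    constructor
    · rintro ⟨hc, h⟩
      set a := Real.log c with ha
      have key : ∀ u : ℝ, Real.sin (a + u) = Real.sin a + Real.sin u := by
        intro u
        have hu := Real.exp_pos u
        have heq := h (Real.exp u) hu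
        rw [phiEx_of_pos (by positivity), phiEx_of_pos hc, phiEx_of_pos hu,
          Real.log_mul hc.ne' hu.ne', Real.log_exp] at heq
        have h1 : Real.exp (Real.sin (a + u)) = Real.exp (Real.sin a + Real.sin u) := by
          have hc5 : (0:ℝ) < c ^ 5 * Real.exp u ^ 5 := by positivity
          apply mul_left_cancel₀ hc5.ne'
          rw [Real.exp_add]
          linear_combination heq
        rwa [Real.exp_eq_exp] at h1
      have k1 := key (Real.pi / 2)
      have k2 := key (-(Real.pi / 2))
      rw [Real.sin_add_pi_div_two, Real.sin_pi_div_two] at k1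
      rw [← sub_eq_add_neg, Real.sin_sub_pi_div_two] at k2
      have k2' : -Real.cos a = Real.sin a + -1 := by
        rw [k2, Real.sin_neg, Real.sin_pi_div_two]
      have hcos1 : Real.cos a = 1 := by linarith
      obtain ⟨k, hk⟩ := (Real.cos_eq_one_iff a).1 hcos1
      refine ⟨k, ?_⟩
      rw [← Real.exp_log hc, ← ha]
      congr 1
      rw [← hk]; ring
    · rintro ⟨k, rfl⟩
      have hc : (0:ℝ) < Real.exp (2 * Real.pi * k) := Real.exp_pos _
      refine ⟨hc, fun t ht => ?_⟩
      rw [phiEx_of_pos (by positivity), phiEx_of_pos hc, phiEx_of_pos ht,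
        Real.log_mul hc.ne' ht.ne', Real.log_exp]
      have hs1 : Real.sin (2 * Real.pi * k + Real.log t) = Real.sin (Real.log t) := by
        rw [add_comm]
        have := Real.sin_add_int_mul_two_pi (Real.log t) k
        convert this using 2
        ring
      have hs0 : Real.sin (2 * Real.pi * (k:ℝ)) = 0 := by
        have h0 := Real.sin_add_int_mul_two_pi 0 k
        rw [zero_add, Real.sin_zero] at h0
        rw [show 2 * Real.pi * (k:ℝ) = (k:ℝ) * (2 * Real.pi) by ring, h0]
      rw [hs1, hs0, Real.exp_zero, mul_pow]
      ring
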